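/- Let G and H be signed weighted graphs on the same finite vertex set V with d_cut(G⁻,H⁻) ≤ β. Then for every clustering 𝒞 = {C₁,…,C_k} of V, the quantity Σ_{i=1}^{k} (w_{H⁻}(C_i,C_i) − w_{G⁻}(C_i,C_i)) has absolute value at most 4β, where w(C,C) denotes the sum of w({u,v}) over unordered pairs {u,v} of distinct vertices of C. -/

import Mathlib

open Finset

/-- `pairSum w S T = Σ_{u ∈ S, v ∈ T, u ≠ v} w u v`. -/
noncomputable def pairSum {V : Type*} [Fintype V] [DecidableEq V]
    (w : V → V → ℝ) (S T : Finset V) : ℝ :=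
  ∑ u ∈ S, ∑ v ∈ T, if u = v then 0 else w u v

/-- `w(C,C)`: the sum of `w` over unordered pairs of distinct vertices of `C`. -/
noncomputable def innerSum {V : Type*} [Fintype V] [DecidableEq V]
    (w : V → V → ℝ) (C : Finset V) : ℝ :=
  (1 / 2) * pairSum w C C

lemma pairSum_biUnion_left {V ι : Type*} [Fintype V] [DecidableEq V] [DecidableEq ι]
    (w : V → V → ℝ) (s : Finset ι) (C : ι → Finset V)
    (h : ∀ i ∈ s, ∀ j ∈ s, i ≠ j → Disjoint (C i) (C j)) (T : Finset V) :
    pairSum w (s.biUnion C) T = ∑ i ∈ s, pairSum w (C i) T := by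
  unfold pairSum
  refine Finset.sum_biUnion ?_
  intro i hi j hj hij
  exact h i (by simpa using hi) j (by simpa using hj) hij

lemma pairSum_biUnion_right {V ι : Type*} [Fintype V] [DecidableEq V] [DecidableEq ι]
    (w : V → V → ℝ) (s : Finset ι) (C : ι → Finset V)
    (h : ∀ i ∈ s, ∀ j ∈ s, i ≠ j → Disjoint (C i) (C j)) (S : Finset V) :
    pairSum w S (s.biUnion C) = ∑ i ∈ s, pairSum w S (C i) := by
  unfold pairSum
  have hdis : (↑s : Set ι).PairwiseDisjoint C :=
    fun i hi j hj hij => h i (Finset.mem_coe.mp hi) j (Finset.mem_coe.mp hj) hij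
  rw [Finset.sum_comm, Finset.sum_biUnion hdis]
  exact Finset.sum_congr rfl fun i _ => Finset.sum_comm

lemma sg_sum {k : ℕ} (i j : Fin k) :
    ∑ ε : Fin k → Bool, ((if ε i then (1:ℝ) else -1) * (if ε j then (1:ℝ) else -1))
      = if i = j then (2:ℝ)^k else 0 := by
  by_cases hij : i = j
  · subst hij
    simp only [if_pos rfl]
    have : ∀ ε : Fin k → Bool,
        ((if ε i then (1:ℝ) else -1) * (if ε i then (1:ℝ) else -1)) = 1 := by
      intro ε; by_cases h : ε i <;> simp [h]
    rw [Finset.sum_congr rfl fun ε _ => this ε, Finset.sum_const]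
    simp [Fintype.card_fun]
  · rw [if_neg hij]
    refine Finset.sum_involution
      (g := fun ε _ => Function.update ε j (!ε j)) ?_ ?_ ?_ ?_
    · intro ε _
      rw [Function.update_of_ne hij, Function.update_self]
      by_cases h : ε j <;> by_cases h' : ε i <;> simp [h, h'] <;> ring
    · intro ε _ hne heq
      have := congrFun heq j
      rw [Function.update_self] at this
      exact (Bool.not_ne_self (ε j)) this
    · intro ε _; exact Finset.mem_univ _
    · intro ε _
      funext x
      by_cases hx : x = j
      · subst hx; simp
      · simp [Function.update_of_ne hx]

theorem stmt2 {V : Type*} [Fintype V] [DecidableEq V]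
    (Gn Hn : V → V → ℝ) (β : ℝ)
    (hGnsymm : ∀ u v, Gn u v = Gn v u) (hHnsymm : ∀ u v, Hn u v = Hn v u)
    (hGnnn : ∀ u v, 0 ≤ Gn u v) (hHnnn : ∀ u v, 0 ≤ Hn u v)
    (hcutn : ∀ S T : Finset V, |pairSum Gn S T - pairSum Hn S T| ≤ β)
    {k : ℕ} (C : Fin k → Finset V)
    (hdisj : ∀ i j, i ≠ j → Disjoint (C i) (C j))
    (hcover : ∀ v : V, ∃ i, v ∈ C i)
    (hne : ∀ i, (C i).Nonempty) :
    |∑ i, (innerSum Hn (C i) - innerSum Gn (C i))| ≤ 4 * β := by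
  set D : Finset V → Finset V → ℝ := fun S T => pairSum Hn S T - pairSum Gn S T with hDdef
  have hD : ∀ S T, |D S T| ≤ β := by
    intro S T
    rw [hDdef]
    simpa [abs_sub_comm] using hcutn S T
  have hβ : 0 ≤ β := by
    have := hD ∅ ∅
    simp only [hDdef] at this
    simp [pairSum] at this
    exact le_trans (abs_nonneg _) (by simpa [pairSum] using hD ∅ ∅)
  have hDadd : ∀ (s t : Finset (Fin k)),
      D (s.biUnion C) (t.biUnion C) = ∑ i ∈ s, ∑ j ∈ t, D (C i) (C j) := by
    intro s t
    have hds : ∀ i ∈ s, ∀ j ∈ s, i ≠ j → Disjoint (C i) (C j) :=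
      fun i _ j _ h => hdisj i j h
    have hdt : ∀ i ∈ t, ∀ j ∈ t, i ≠ j → Disjoint (C i) (C j) :=
      fun i _ j _ h => hdisj i j h
    simp only [hDdef]
    rw [pairSum_biUnion_left Hn s C hds, pairSum_biUnion_left Gn s C hds,
      ← Finset.sum_sub_distrib]
    refine Finset.sum_congr rfl fun i _ => ?_
    rw [pairSum_biUnion_right Hn t C hdt, pairSum_biUnion_right Gn t C hdt,
      ← Finset.sum_sub_distrib]
  -- the key bound for each sign vector ε
  have hqbound : ∀ ε : Fin k → Bool,
      |∑ i, ∑ j, ((if ε i then (1:ℝ) else -1) * (if ε j then (1:ℝ) else -1))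
        * D (C i) (C j)| ≤ 4 * β := by
    intro ε
    set T := Finset.univ.filter (fun i => ε i = true) with hTdef
    set F := Finset.univ.filter (fun i => ε i = false) with hFdef
    have hsplit : ∀ f : Fin k → ℝ, ∑ i, f i = ∑ i ∈ T, f i + ∑ i ∈ F, f i := by
      intro f
      rw [hTdef, hFdef,
        ← Finset.sum_filter_add_sum_filter_not Finset.univ (fun i => ε i = true) f]
      congr 1
      apply Finset.sum_congr _ fun _ _ => rfl
      ext i; simp
    have key : ∑ i, ∑ j, ((if ε i then (1:ℝ) else -1) * (if ε j then (1:ℝ) else -1))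
          * D (C i) (C j)
        = D (T.biUnion C) (T.biUnion C) - D (T.biUnion C) (F.biUnion C)
          - D (F.biUnion C) (T.biUnion C) + D (F.biUnion C) (F.biUnion C) := by
      rw [hDadd, hDadd, hDadd, hDadd]
      rw [hsplit]
      rw [Finset.sum_congr rfl fun i (_ : i ∈ T) => hsplit
        (fun j => ((if ε i then (1:ℝ) else -1) * (if ε j then (1:ℝ) else -1))
          * D (C i) (C j))]
      rw [Finset.sum_congr rfl fun i (_ : i ∈ F) => hsplit
        (fun j => ((if ε i then (1:ℝ) else -1) * (if ε j then (1:ℝ) else -1))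
          * D (C i) (C j))]
      rw [Finset.sum_add_distrib, Finset.sum_add_distrib]
      have hTT : ∑ i ∈ T, ∑ j ∈ T, ((if ε i then (1:ℝ) else -1)
            * (if ε j then (1:ℝ) else -1)) * D (C i) (C j)
          = ∑ i ∈ T, ∑ j ∈ T, D (C i) (C j) := by
        refine Finset.sum_congr rfl fun i hi => Finset.sum_congr rfl fun j hj => ?_
        rw [hTdef] at hi hj
        simp only [Finset.mem_filter] at hi hj
        rw [hi.2, hj.2]; simp
      have hTF : ∑ i ∈ T, ∑ j ∈ F, ((if ε i then (1:ℝ) else -1)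
            * (if ε j then (1:ℝ) else -1)) * D (C i) (C j)
          = -∑ i ∈ T, ∑ j ∈ F, D (C i) (C j) := by
        rw [← Finset.sum_neg_distrib]
        refine Finset.sum_congr rfl fun i hi => ?_
        rw [← Finset.sum_neg_distrib]
        refine Finset.sum_congr rfl fun j hj => ?_
        rw [hTdef] at hi; rw [hFdef] at hj
        simp only [Finset.mem_filter] at hi hj
        rw [hi.2, hj.2]; simp
      have hFT : ∑ i ∈ F, ∑ j ∈ T, ((if ε i then (1:ℝ) else -1)
            * (if ε j then (1:ℝ) else -1)) * D (C i) (C j)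
          = -∑ i ∈ F, ∑ j ∈ T, D (C i) (C j) := by
        rw [← Finset.sum_neg_distrib]
        refine Finset.sum_congr rfl fun i hi => ?_
        rw [← Finset.sum_neg_distrib]
        refine Finset.sum_congr rfl fun j hj => ?_
        rw [hFdef] at hi; rw [hTdef] at hj
        simp only [Finset.mem_filter] at hi hj
        rw [hi.2, hj.2]; simp
      have hFF : ∑ i ∈ F, ∑ j ∈ F, ((if ε i then (1:ℝ) else -1)
            * (if ε j then (1:ℝ) else -1)) * D (C i) (C j)
          = ∑ i ∈ F, ∑ j ∈ F, D (C i) (C j) := by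
        refine Finset.sum_congr rfl fun i hi => Finset.sum_congr rfl fun j hj => ?_
        rw [hFdef] at hi hj
        simp only [Finset.mem_filter] at hi hj
        rw [hi.2, hj.2]; simp
      rw [hTT, hTF, hFT, hFF]
      ring
    rw [key]
    have h1 := hD (T.biUnion C) (T.biUnion C)
    have h2 := hD (T.biUnion C) (F.biUnion C)
    have h3 := hD (F.biUnion C) (T.biUnion C)
    have h4 := hD (F.biUnion C) (F.biUnion C)
    have := abs_sub (D (T.biUnion C) (T.biUnion C)) (D (T.biUnion C) (F.biUnion C))
    calc |D (T.biUnion C) (T.biUnion C) - D (T.biUnion C) (F.biUnion C)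
          - D (F.biUnion C) (T.biUnion C) + D (F.biUnion C) (F.biUnion C)|
        ≤ |D (T.biUnion C) (T.biUnion C)| + |D (T.biUnion C) (F.biUnion C)|
          + |D (F.biUnion C) (T.biUnion C)| + |D (F.biUnion C) (F.biUnion C)| := by
          have := abs_add_le (D (T.biUnion C) (T.biUnion C) - D (T.biUnion C) (F.biUnion C)
            - D (F.biUnion C) (T.biUnion C)) (D (F.biUnion C) (F.biUnion C))
          have h5 := abs_sub (D (T.biUnion C) (T.biUnion C) - D (T.biUnion C) (F.biUnion C))
            (D (F.biUnion C) (T.biUnion C))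
          have h6 := abs_sub (D (T.biUnion C) (T.biUnion C)) (D (T.biUnion C) (F.biUnion C))
          linarith
      _ ≤ 4 * β := by linarith
  -- averaging over all sign vectors
  have havg : (2:ℝ)^k * ∑ i, D (C i) (C i)
      = ∑ ε : Fin k → Bool, ∑ i, ∑ j,
          ((if ε i then (1:ℝ) else -1) * (if ε j then (1:ℝ) else -1)) * D (C i) (C j) := by
    rw [Finset.sum_comm]
    rw [Finset.mul_sum]
    refine Finset.sum_congr rfl fun i _ => ?_
    rw [Finset.sum_comm]
    have : ∀ j : Fin k, ∑ ε : Fin k → Bool,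
        ((if ε i then (1:ℝ) else -1) * (if ε j then (1:ℝ) else -1)) * D (C i) (C j)
        = (if i = j then (2:ℝ)^k else 0) * D (C i) (C j) := by
      intro j
      rw [← Finset.sum_mul, sg_sum]
    rw [Finset.sum_congr rfl fun j _ => this j]
    simp [ite_mul, Finset.sum_ite_eq]
  have hsum : |∑ i, D (C i) (C i)| ≤ 4 * β := by
    have hcard : ((Finset.univ : Finset (Fin k → Bool)).card : ℝ) = (2:ℝ)^k := by
      simp [Fintype.card_fun]
    have hb : |∑ ε : Fin k → Bool, ∑ i, ∑ j,
        ((if ε i then (1:ℝ) else -1) * (if ε j then (1:ℝ) else -1)) * D (C i) (C j)|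
        ≤ (2:ℝ)^k * (4 * β) := by
      calc |∑ ε : Fin k → Bool, ∑ i, ∑ j,
            ((if ε i then (1:ℝ) else -1) * (if ε j then (1:ℝ) else -1)) * D (C i) (C j)|
          ≤ ∑ ε : Fin k → Bool, |∑ i, ∑ j,
            ((if ε i then (1:ℝ) else -1) * (if ε j then (1:ℝ) else -1)) * D (C i) (C j)| :=
            Finset.abs_sum_le_sum_abs _ _
        _ ≤ ∑ _ε : Fin k → Bool, 4 * β :=
            Finset.sum_le_sum fun ε _ => hqbound ε
        _ = (2:ℝ)^k * (4 * β) := by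
            rw [Finset.sum_const, nsmul_eq_mul, hcard]
    rw [← havg, abs_mul, abs_pow] at hb
    have h2 : |(2:ℝ)| ^ k = (2:ℝ)^k := by norm_num
    rw [h2] at hb
    have hpos : (0:ℝ) < (2:ℝ)^k := by positivity
    exact le_of_mul_le_mul_left hb hpos
  -- conclude
  have hgoal : ∑ i, (innerSum Hn (C i) - innerSum Gn (C i))
      = (1/2) * ∑ i, D (C i) (C i) := by
    rw [Finset.mul_sum]
    refine Finset.sum_congr rfl fun i _ => ?_
    simp only [hDdef, innerSum]
    ring
  rw [hgoal, abs_mul]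
  have : |(1:ℝ)/2| = 1/2 := by norm_num
  rw [this]
  nlinarith [abs_nonneg (∑ i, D (C i) (C i))]
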